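/- Consider the manifold ℝ³ with coordinates (t,x,y) and the Lorentzian metric g = (1+cos(t-x))dt² + 2(3+cos(t-x))dt dx + (1+cos(t-x))dx² + (4+2cos(t-x))dy². Then the vector field U = f(t,x)(∂t - ∂x), with f(t,x) = √(2+cos(t-x)), is timelike, irrotational and conformal: ∇_X U = X₁(f)·X for X ∈ {X₁, X₂, X₃} where X₁ = ∂t - ∂x, X₂ = ∂t + ∂x, X₃ = ∂y. -/

import Mathlib

namespace Stmt17

/-- The Lorentzian metric
`g = (1+cos(t-x))dt² + 2(3+cos(t-x))dt dx + (1+cos(t-x))dx² + (4+2cos(t-x))dy²`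
on `ℝ³` with coordinates `p = (t,x,y)`, as a field of bilinear forms. -/
noncomputable def gM (p u v : ℝ × ℝ × ℝ) : ℝ :=
  (1 + Real.cos (p.1 - p.2.1)) * (u.1 * v.1 + u.2.1 * v.2.1)
    + (3 + Real.cos (p.1 - p.2.1)) * (u.1 * v.2.1 + u.2.1 * v.1)
    + (4 + 2 * Real.cos (p.1 - p.2.1)) * (u.2.2 * v.2.2)

noncomputable def f (p : ℝ × ℝ × ℝ) : ℝ := Real.sqrt (2 + Real.cos (p.1 - p.2.1))

def x1 : ℝ × ℝ × ℝ := (1, -1, 0)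
def x2 : ℝ × ℝ × ℝ := (1, 1, 0)
def x3 : ℝ × ℝ × ℝ := (0, 0, 1)

/-- The constant coordinate vector fields `X₁ = ∂t - ∂x`, `X₂ = ∂t + ∂x`,
`X₃ = ∂y`. -/
def X1 : ℝ × ℝ × ℝ → ℝ × ℝ × ℝ := fun _ => x1
def X2 : ℝ × ℝ × ℝ → ℝ × ℝ × ℝ := fun _ => x2
def X3 : ℝ × ℝ × ℝ → ℝ × ℝ × ℝ := fun _ => x3

/-- The vector field `U = f(t,x)·(∂t - ∂x)`, `f = √(2+cos(t-x))`. -/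
noncomputable def U : ℝ × ℝ × ℝ → ℝ × ℝ × ℝ := fun p => f p • x1

/-- Lie bracket of vector fields on `ℝ³`. -/
noncomputable def br (V W : ℝ × ℝ × ℝ → ℝ × ℝ × ℝ) (p : ℝ × ℝ × ℝ) : ℝ × ℝ × ℝ :=
  fderiv ℝ W p (V p) - fderiv ℝ V p (W p)

/-- The linear map `v ↦ v.1 - v.2.1`, i.e. `dt - dx`. -/
noncomputable def D : ℝ × ℝ × ℝ →L[ℝ] ℝ :=
  ContinuousLinearMap.fst ℝ ℝ (ℝ × ℝ) -
    (ContinuousLinearMap.fst ℝ ℝ ℝ).comp (ContinuousLinearMap.snd ℝ ℝ (ℝ × ℝ))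

lemma D_apply (v : ℝ × ℝ × ℝ) : D v = v.1 - v.2.1 := rfl

lemma hD (p : ℝ × ℝ × ℝ) : HasFDerivAt (fun q : ℝ × ℝ × ℝ => q.1 - q.2.1) D p :=
  D.hasFDerivAt

/-- The Koszul identity for `U` tested against two arbitrary constant fields. -/
lemma key (u z p : ℝ × ℝ × ℝ) :
    fderiv ℝ (fun q => gM q (U q) z) p u
      + fderiv ℝ (fun q => gM q z u) p (U p)
      - fderiv ℝ (fun q => gM q u (U q)) p z
      - gM p u (br U (fun _ => z) p)
      + gM p (U p) (br (fun _ => z) (fun _ => u) p)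
      + gM p z (br (fun _ => u) U p)
    = 2 * (fderiv ℝ f p x1) * gM p u z := by
  have h2 : (0:ℝ) < 2 + Real.cos (p.1 - p.2.1) := by
    nlinarith [Real.neg_one_le_cos (p.1 - p.2.1)]
  set s : ℝ := p.1 - p.2.1 with hs
  set F : ℝ := Real.sqrt (2 + Real.cos s) with hF
  have hFpos : 0 < F := Real.sqrt_pos.2 h2
  have hFsq : F ^ 2 = 2 + Real.cos s := Real.sq_sqrt h2.le
  have hcos : Real.cos s = F ^ 2 - 2 := by linarith
  have hgc : HasFDerivAt (fun q : ℝ × ℝ × ℝ => 2 + Real.cos (q.1 - q.2.1))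
      (-Real.sin s • D) p := ((hD p).cos).const_add 2
  have hf : HasFDerivAt f ((1 / (2 * F)) • (-Real.sin s • D)) p := hgc.sqrt h2.ne'
  set Lf : ℝ × ℝ × ℝ →L[ℝ] ℝ := (1 / (2 * F)) • (-Real.sin s • D) with hLf
  have hLfv : ∀ v : ℝ × ℝ × ℝ, Lf v = (1 / (2 * F)) * (-Real.sin s * (v.1 - v.2.1)) := by
    intro v; simp [hLf, D_apply]
  have df : fderiv ℝ f p = Lf := hf.fderiv
  have e1 : (fun q => gM q (U q) z) = fun q => (-2 * (z.1 - z.2.1)) * f q := by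
    funext q; simp [gM, U, x1, Prod.smul_mk, smul_eq_mul]; ring
  have d1 : fderiv ℝ (fun q => gM q (U q) z) p = (-2 * (z.1 - z.2.1)) • Lf := by
    rw [e1]; exact (hf.const_mul _).fderiv
  have e3 : (fun q => gM q u (U q)) = fun q => (-2 * (u.1 - u.2.1)) * f q := by
    funext q; simp [gM, U, x1, Prod.smul_mk, smul_eq_mul]; ring
  have d3 : fderiv ℝ (fun q => gM q u (U q)) p = (-2 * (u.1 - u.2.1)) • Lf := by
    rw [e3]; exact (hf.const_mul _).fderiv
  set A : ℝ := z.1 * u.1 + z.2.1 * u.2.1 + 3 * (z.1 * u.2.1 + z.2.1 * u.1) + 4 * (z.2.2 * u.2.2)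
    with hA
  set B : ℝ := z.1 * u.1 + z.2.1 * u.2.1 + (z.1 * u.2.1 + z.2.1 * u.1) + 2 * (z.2.2 * u.2.2)
    with hB
  have e2 : (fun q => gM q z u) = fun q => A + B * Real.cos (q.1 - q.2.1) := by
    funext q; simp [gM, hA, hB]; ring
  have d2 : fderiv ℝ (fun q => gM q z u) p = B • (-Real.sin s • D) := by
    rw [e2]; exact (((hD p).cos.const_mul B).const_add A).fderiv
  have hU : HasFDerivAt U (Lf.smulRight x1) p := by
    have h := hf.smul (hasFDerivAt_const x1 p)
    simp at h
    exact h
  have dU : fderiv ℝ U p = Lf.smulRight x1 := hU.fderiv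
  have hbr1 : br U (fun _ => z) p = (0 : ℝ × ℝ × ℝ) - Lf z • x1 := by
    simp [br, dU]
  have hbr2 : br (fun _ => z) (fun _ => u) p = (0 : ℝ × ℝ × ℝ) := by
    simp [br]
  have hbr3 : br (fun _ => u) U p = Lf u • x1 - (0 : ℝ × ℝ × ℝ) := by
    simp [br, dU]
  rw [d1, d2, d3, df, hbr1, hbr2, hbr3]
  simp only [ContinuousLinearMap.smul_apply, smul_eq_mul, hLfv, D_apply, zero_sub, sub_zero]
  have hUp : U p = (F, -F, 0) := by
    simp [U, f, x1, Prod.smul_mk, smul_eq_mul, ← hs, ← hF]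
  rw [hUp]
  simp only [gM, ← hs, hcos, x1, Prod.smul_mk, smul_eq_mul, Prod.fst, Prod.snd,
    neg_smul, Prod.neg_mk, Prod.mk.injEq]
  field_simp
  simp only [Prod.fst_zero, Prod.snd_zero, hB]
  ring

/-- Example 2.6 (on the universal cover `ℝ³` of `𝕊¹ × ℝ²`): the vector field
`U = f(t,x)(∂t - ∂x)` is timelike, and irrotational and conformal:
`∇_X U = X₁(f)·X` for `X ∈ {X₁, X₂, X₃}`, expressed through the Koszul formula
`2g(∇_V W, Z) = V g(W,Z) + W g(Z,V) - Z g(V,W) - g(V,[W,Z]) + g(W,[Z,V]) + g(Z,[V,W])`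
tested against the frame `{X₁, X₂, X₃}`. -/
theorem stmt_17 :
    (∀ p : ℝ × ℝ × ℝ, gM p (U p) (U p) < 0) ∧
    (∀ Xi ∈ ({X1, X2, X3} : Set (ℝ × ℝ × ℝ → ℝ × ℝ × ℝ)),
      ∀ Z ∈ ({X1, X2, X3} : Set (ℝ × ℝ × ℝ → ℝ × ℝ × ℝ)),
        ∀ p : ℝ × ℝ × ℝ,
          fderiv ℝ (fun q => gM q (U q) (Z q)) p (Xi p)
            + fderiv ℝ (fun q => gM q (Z q) (Xi q)) p (U p)
            - fderiv ℝ (fun q => gM q (Xi q) (U q)) p (Z p)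
            - gM p (Xi p) (br U Z p)
            + gM p (U p) (br Z Xi p)
            + gM p (Z p) (br Xi U p)
          = 2 * (fderiv ℝ f p x1) * gM p (Xi p) (Z p)) := by
  constructor
  · intro p
    have h2 : (0:ℝ) < 2 + Real.cos (p.1 - p.2.1) := by
      nlinarith [Real.neg_one_le_cos (p.1 - p.2.1)]
    have : gM p (U p) (U p) = -4 * Real.sqrt (2 + Real.cos (p.1 - p.2.1)) ^ 2 := by
      simp [gM, U, f, x1, Prod.smul_mk, smul_eq_mul]; ring
    rw [this, Real.sq_sqrt h2.le]
    nlinarith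
  · intro Xi hXi Z hZ p
    simp only [Set.mem_insert_iff, Set.mem_singleton_iff] at hXi hZ
    rcases hXi with rfl | rfl | rfl <;> rcases hZ with rfl | rfl | rfl
    · exact key x1 x1 p
    · exact key x1 x2 p
    · exact key x1 x3 p
    · exact key x2 x1 p
    · exact key x2 x2 p
    · exact key x2 x3 p
    · exact key x3 x1 p
    · exact key x3 x2 p
    · exact key x3 x3 p

end Stmt17
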